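/- Let B be the adjacency matrix of a connected undirected graph on N vertices, fix τ₂ > 0, and let x, y : ℝ → ℝ^N be differentiable at a point τ₁ > 0, with 0 < x_i(τ), 0 < y_i(τ) and x_i(τ) + y_i(τ) < 1 for all i, for τ in a neighborhood of τ₁, and suppose that for every such τ the second coexistence fixed point equation Σ_j B_{ij} y_j(τ) = y_i(τ)/(τ₂(1 − x_i(τ) − y_i(τ))) holds for all i. If y_j'(τ₁) < 0 for all j, then for every i one has (1 − x_i(τ₁))·y_i'(τ₁) + y_i(τ₁)·x_i'(τ₁) < 0; in particular the derivative of τ ↦ y_i(τ)/(1 − x_i(τ)) at τ₁ is strictly negative for every i, i.e., y_i/(1 − x_i) strictly decreases in the effective infection rate τ₁ of Virus 1. -/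

import Mathlib

open Matrix Finset

/-- Spectral radius of a real matrix: supremum of absolute values of its complex eigenvalues. -/
noncomputable def specRad {N : ℕ} (M : Matrix (Fin N) (Fin N) ℝ) : ℝ :=
  sSup ((fun z => ‖z‖) '' spectrum ℂ (M.map Complex.ofReal))

/-- `A` is the adjacency matrix of a connected undirected graph:
symmetric, 0/1 entries, zero diagonal, and irreducible (connectivity). -/
def IsConnectedAdjMatrix {N : ℕ} (A : Matrix (Fin N) (Fin N) ℝ) : Prop :=
  A.IsSymm ∧ (∀ i j, A i j = 0 ∨ A i j = 1) ∧ (∀ i, A i i = 0) ∧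
    (∀ i j, i ≠ j → ∃ k : ℕ, 0 < (A ^ k) i j)

/-- `x` satisfies the single-virus SIS fixed point equations for `(A, τ)`. -/
def IsSISFixedPoint {N : ℕ} (A : Matrix (Fin N) (Fin N) ℝ) (τ : ℝ)
    (x : Fin N → ℝ) : Prop :=
  (∀ i, 0 < x i ∧ x i < 1) ∧ (∀ i, ∑ j, A i j * x j = x i / (τ * (1 - x i)))

/-- Let `B` be the adjacency matrix of a connected undirected graph on `N`
vertices, fix `τ₂ > 0`, and let `x, y : ℝ → ℝ^N` be differentiable at a point `τ₁ > 0`, with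
`0 < x_i(τ)`, `0 < y_i(τ)` and `x_i(τ) + y_i(τ) < 1` for all `i`, for `τ` in a neighborhood of
`τ₁`, and suppose that for every such `τ` the second coexistence fixed point equation
`Σ_j B_{ij} y_j(τ) = y_i(τ)/(τ₂(1 − x_i(τ) − y_i(τ)))` holds for all `i`. If `y_j'(τ₁) < 0`
for all `j`, then for every `i` one has
`(1 − x_i(τ₁))·y_i'(τ₁) + y_i(τ₁)·x_i'(τ₁) < 0`; in particular the derivative of
`τ ↦ y_i(τ)/(1 − x_i(τ))` at `τ₁` is strictly negative for every `i`. -/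
theorem fi_decreasing_in_tau1 {N : ℕ}
    (B : Matrix (Fin N) (Fin N) ℝ) (hB : IsConnectedAdjMatrix B)
    (τ₁ τ₂ : ℝ) (hτ₁ : 0 < τ₁) (hτ₂ : 0 < τ₂)
    (x y : ℝ → Fin N → ℝ)
    (hdx : ∀ i, DifferentiableAt ℝ (fun τ => x τ i) τ₁)
    (hdy : ∀ i, DifferentiableAt ℝ (fun τ => y τ i) τ₁)
    (hnbhd : ∀ᶠ τ in nhds τ₁,
      (∀ i, 0 < x τ i ∧ 0 < y τ i ∧ x τ i + y τ i < 1) ∧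
      (∀ i, ∑ j, B i j * y τ j = y τ i / (τ₂ * (1 - x τ i - y τ i))))
    (hy' : ∀ j, deriv (fun τ => y τ j) τ₁ < 0) :
    ∀ i, (1 - x τ₁ i) * deriv (fun τ => y τ i) τ₁ +
        y τ₁ i * deriv (fun τ => x τ i) τ₁ < 0 ∧
      deriv (fun τ => y τ i / (1 - x τ i)) τ₁ < 0 := by
  intro i
  obtain ⟨hpt, heqpt⟩ := hnbhd.self_of_nhds
  obtain ⟨hx0, hy0, hxy⟩ := hpt i
  set X := x τ₁ i with hX
  set Y := y τ₁ i with hY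
  set x' := deriv (fun τ => x τ i) τ₁ with hx'def
  set y' := deriv (fun τ => y τ i) τ₁ with hy'def
  have hd : 0 < 1 - X - Y := by linarith
  have hτd : 0 < τ₂ * (1 - X - Y) := by positivity
  have hdne : τ₂ * (1 - x τ₁ i - y τ₁ i) ≠ 0 := ne_of_gt hτd
  -- derivative of the left-hand side
  have hL : HasDerivAt (fun τ => ∑ j, B i j * y τ j)
      (∑ j, B i j * deriv (fun τ => y τ j) τ₁) τ₁ :=
    HasDerivAt.fun_sum fun j _ => ((hdy j).hasDerivAt.const_mul (B i j))
  -- derivative of the denominator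
  have hdd : HasDerivAt (fun τ => τ₂ * (1 - x τ i - y τ i))
      (τ₂ * (0 - x' - y')) τ₁ :=
    (((hasDerivAt_const τ₁ (1:ℝ)).sub (hdx i).hasDerivAt).sub
      (hdy i).hasDerivAt).const_mul τ₂
  have hR : HasDerivAt (fun τ => y τ i / (τ₂ * (1 - x τ i - y τ i)))
      ((y' * (τ₂ * (1 - X - Y)) - Y * (τ₂ * (0 - x' - y'))) /
        (τ₂ * (1 - X - Y))^2) τ₁ :=
    (hdy i).hasDerivAt.div hdd hdne
  have hEq : (fun τ => ∑ j, B i j * y τ j)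
      =ᶠ[nhds τ₁] (fun τ => y τ i / (τ₂ * (1 - x τ i - y τ i))) :=
    hnbhd.mono fun τ h => h.2 i
  have heqderiv := hEq.deriv_eq
  rw [hL.deriv, hR.deriv] at heqderiv
  -- the sum on the left is positive at τ₁, so some entry B i j₀ is positive
  have hsumpos : 0 < ∑ j, B i j * y τ₁ j := by
    rw [heqpt i]
    exact div_pos hy0 hτd
  have hex : ∃ j, 0 < B i j * y τ₁ j := by
    by_contra h
    push_neg at h
    have : ∑ j, B i j * y τ₁ j ≤ 0 := Finset.sum_nonpos fun j _ => h j
    linarith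
  obtain ⟨j₀, hj₀⟩ := hex
  have hBj₀ : 0 < B i j₀ := by
    rcases hB.2.1 i j₀ with h | h
    · rw [h] at hj₀; simp at hj₀
    · rw [h]; norm_num
  have hBnn : ∀ j, 0 ≤ B i j := fun j => by
    rcases hB.2.1 i j with h | h <;> rw [h] <;> norm_num
  -- the derivative of the sum is negative
  have hS : ∑ j, B i j * deriv (fun τ => y τ j) τ₁ < 0 := by
    have := Finset.sum_lt_sum (s := Finset.univ)
      (f := fun j => B i j * deriv (fun τ => y τ j) τ₁)
      (g := fun _ => (0:ℝ))
      (fun j _ => mul_nonpos_of_nonneg_of_nonpos (hBnn j) (le_of_lt (hy' j)))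
      ⟨j₀, Finset.mem_univ j₀, mul_neg_of_pos_of_neg hBj₀ (hy' j₀)⟩
    simpa using this
  have hD : (y' * (τ₂ * (1 - X - Y)) - Y * (τ₂ * (0 - x' - y'))) /
      (τ₂ * (1 - X - Y))^2 < 0 := heqderiv ▸ hS
  have hτne : τ₂ ≠ 0 := ne_of_gt hτ₂
  have hdne' : (1 - X - Y) ≠ 0 := ne_of_gt hd
  have hkey : (1 - X) * y' + Y * x' < 0 := by
    have h2 : (1 - X) * y' + Y * x' =
        ((y' * (τ₂ * (1 - X - Y)) - Y * (τ₂ * (0 - x' - y'))) /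
          (τ₂ * (1 - X - Y))^2) * (τ₂ * (1 - X - Y)^2) := by
      field_simp
      ring
    rw [h2]
    exact mul_neg_of_neg_of_pos hD (by positivity)
  have h1x : (0:ℝ) < 1 - X := by linarith
  have hG : HasDerivAt (fun τ => y τ i / (1 - x τ i))
      ((y' * (1 - X) - Y * (0 - x')) / (1 - X)^2) τ₁ :=
    (hdy i).hasDerivAt.div
      ((hasDerivAt_const τ₁ (1:ℝ)).sub (hdx i).hasDerivAt)
      (ne_of_gt h1x)
  refine ⟨hkey, ?_⟩
  rw [hG.deriv]
  apply div_neg_of_neg_of_pos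
  · have : y' * (1 - X) - Y * (0 - x') = (1 - X) * y' + Y * x' := by ring
    rw [this]; exact hkey
  · positivity
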